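/- Let Z = U S where U is an n×n unitary matrix and S has independent mean-zero components with Cum[S_i,S_j,S_k,S_l] = kurt_i δ_{ijkl}. Then for any n×n matrix M = (m_{lk}), the matrix Q with entries q_{ij} = Σ_{k,l} Cum(Z_i, Z_j*, Z_k, Z_l*) m_{lk} equals Σ_{p=1}^n (kurt_p · u_p' M u_p) u_p u_p', where u_p is the p-th column of U; in particular Q = U D U' with D diagonal. -/

import Mathlib

open MeasureTheory

/-- Fourth-order cumulant of complex random variables. -/
noncomputable def ccum4 {Ω : Type*} [MeasurableSpace Ω] (μ : Measure Ω)
    (a b c d : Ω → ℂ) : ℂ :=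
  (∫ ω, a ω * b ω * c ω * d ω ∂μ)
    - (∫ ω, a ω * b ω ∂μ) * (∫ ω, c ω * d ω ∂μ)
    - (∫ ω, a ω * c ω ∂μ) * (∫ ω, b ω * d ω ∂μ)
    - (∫ ω, a ω * d ω ∂μ) * (∫ ω, b ω * c ω ∂μ)

section Aux

open scoped ENNReal

variable {Ω : Type*} [MeasurableSpace Ω] {μ : Measure Ω}

lemma memLp_conj' {p : ℝ≥0∞} {f : Ω → ℂ} (hf : MemLp f p μ) :
    MemLp (fun ω => starRingEnd ℂ (f ω)) p μ :=
  (Complex.conjCLE.toContinuousLinearMap).comp_memLp' hf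

lemma integrable_mul2' [IsFiniteMeasure μ] {f g : Ω → ℂ}
    (hf : MemLp f 2 μ) (hg : MemLp g 2 μ) :
    Integrable (fun ω => f ω * g ω) μ := by
  rw [← memLp_one_iff_integrable]
  haveI : ENNReal.HolderTriple 2 2 1 := ⟨by rw [ENNReal.inv_two_add_inv_two, inv_one]⟩
  have h := hf.smul hg (p := 2) (q := 2) (r := 1)
  exact (by simpa [Pi.smul_apply, smul_eq_mul, mul_comm] using h : MemLp (f * g) _ μ)

lemma memLp2_mul' {f g : Ω → ℂ} (hf : MemLp f 4 μ) (hg : MemLp g 4 μ) :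
    MemLp (fun ω => f ω * g ω) 2 μ := by
  haveI : ENNReal.HolderTriple 4 4 2 := ⟨by
    rw [← two_mul, show (4:ℝ≥0∞) = 2*2 by norm_num, ENNReal.mul_inv (by simp) (by simp), ← mul_assoc,
      ENNReal.mul_inv_cancel (by norm_num) (by norm_num), one_mul]⟩
  have h := hf.smul hg (p := 4) (q := 4) (r := 2)
  exact (by simpa [Pi.smul_apply, smul_eq_mul, mul_comm] using h : MemLp (f * g) _ μ)

lemma integrable_mul4' [IsFiniteMeasure μ] {f g h k : Ω → ℂ}
    (hf : MemLp f 4 μ) (hg : MemLp g 4 μ) (hh : MemLp h 4 μ) (hk : MemLp k 4 μ) :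
    Integrable (fun ω => f ω * g ω * h ω * k ω) μ :=
  (integrable_mul2' (memLp2_mul' hf hg) (memLp2_mul' hh hk)).congr
    (Filter.Eventually.of_forall fun ω => by ring)

variable {n : ℕ}

lemma prod4_sum (a b c d : Fin n → ℂ) :
    (∑ p, a p) * (∑ q, b q) * (∑ r, c r) * (∑ s, d s)
      = ∑ p, ∑ q, ∑ r, ∑ s, a p * b q * c r * d s := by
  have h1 : (∑ p, a p) * (∑ q, b q) = ∑ p, ∑ q, a p * b q :=
    Finset.sum_mul_sum _ _ _ _
  have h2 : (∑ r, c r) * (∑ s, d s) = ∑ r, ∑ s, c r * d s :=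
    Finset.sum_mul_sum _ _ _ _
  rw [mul_assoc, h1, h2, Finset.sum_mul_sum]
  refine Finset.sum_congr rfl fun p _ => ?_
  refine (Finset.sum_congr rfl fun r _ => Finset.sum_mul_sum _ _ _ _).trans ?_
  rw [Finset.sum_comm]
  exact Finset.sum_congr rfl fun q _ => Finset.sum_congr rfl fun r _ =>
    Finset.sum_congr rfl fun s _ => by ring

lemma prod2_sum (a b : Fin n → ℂ) :
    (∑ p, a p) * (∑ q, b q) = ∑ p, ∑ q, a p * b q :=
  Finset.sum_mul_sum _ _ _ _

lemma integral_mul2_sum [IsFiniteMeasure μ]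
    (c₁ c₂ : Fin n → ℂ) (F₁ F₂ : Fin n → Ω → ℂ)
    (h₁ : ∀ p, MemLp (F₁ p) 4 μ) (h₂ : ∀ p, MemLp (F₂ p) 4 μ) :
    (∫ ω, (∑ p, c₁ p * F₁ p ω) * (∑ q, c₂ q * F₂ q ω) ∂μ)
      = ∑ p, ∑ q, c₁ p * c₂ q * ∫ ω, F₁ p ω * F₂ q ω ∂μ := by
  have hint : ∀ p q, Integrable (fun ω => c₁ p * c₂ q * (F₁ p ω * F₂ q ω)) μ :=
    fun p q => (integrable_mul2' ((h₁ p).mono_exponent (by norm_num))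
      ((h₂ q).mono_exponent (by norm_num))).const_mul _
  have expand : (fun ω => (∑ p, c₁ p * F₁ p ω) * (∑ q, c₂ q * F₂ q ω))
      = fun ω => ∑ p, ∑ q, c₁ p * c₂ q * (F₁ p ω * F₂ q ω) := by
    funext ω
    rw [prod2_sum]
    exact Finset.sum_congr rfl fun p _ => Finset.sum_congr rfl fun q _ => by ring
  rw [show (∫ ω, (∑ p, c₁ p * F₁ p ω) * (∑ q, c₂ q * F₂ q ω) ∂μ)
      = ∫ ω, ∑ p, ∑ q, c₁ p * c₂ q * (F₁ p ω * F₂ q ω) ∂μ from by rw [expand]]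
  rw [integral_finset_sum _ fun p _ =>
    integrable_finset_sum _ fun q _ => hint p q]
  refine Finset.sum_congr rfl fun p _ => ?_
  rw [integral_finset_sum _ fun q _ => hint p q]
  exact Finset.sum_congr rfl fun q _ => integral_const_mul _ _

lemma integral_mul4_sum [IsFiniteMeasure μ]
    (c₁ c₂ c₃ c₄ : Fin n → ℂ) (F₁ F₂ F₃ F₄ : Fin n → Ω → ℂ)
    (h₁ : ∀ p, MemLp (F₁ p) 4 μ) (h₂ : ∀ p, MemLp (F₂ p) 4 μ)
    (h₃ : ∀ p, MemLp (F₃ p) 4 μ) (h₄ : ∀ p, MemLp (F₄ p) 4 μ) :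
    (∫ ω, (∑ p, c₁ p * F₁ p ω) * (∑ q, c₂ q * F₂ q ω)
        * (∑ r, c₃ r * F₃ r ω) * (∑ s, c₄ s * F₄ s ω) ∂μ)
      = ∑ p, ∑ q, ∑ r, ∑ s, c₁ p * c₂ q * c₃ r * c₄ s
          * ∫ ω, F₁ p ω * F₂ q ω * F₃ r ω * F₄ s ω ∂μ := by
  have hint : ∀ p q r s, Integrable
      (fun ω => c₁ p * c₂ q * c₃ r * c₄ s * (F₁ p ω * F₂ q ω * F₃ r ω * F₄ s ω)) μ :=
    fun p q r s => (integrable_mul4' (h₁ p) (h₂ q) (h₃ r) (h₄ s)).const_mul _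
  have expand : (fun ω => (∑ p, c₁ p * F₁ p ω) * (∑ q, c₂ q * F₂ q ω)
        * (∑ r, c₃ r * F₃ r ω) * (∑ s, c₄ s * F₄ s ω))
      = fun ω => ∑ p, ∑ q, ∑ r, ∑ s, c₁ p * c₂ q * c₃ r * c₄ s
          * (F₁ p ω * F₂ q ω * F₃ r ω * F₄ s ω) := by
    funext ω
    rw [prod4_sum]
    exact Finset.sum_congr rfl fun p _ => Finset.sum_congr rfl fun q _ =>
      Finset.sum_congr rfl fun r _ => Finset.sum_congr rfl fun s _ => by ring
  rw [show (∫ ω, (∑ p, c₁ p * F₁ p ω) * (∑ q, c₂ q * F₂ q ω)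
        * (∑ r, c₃ r * F₃ r ω) * (∑ s, c₄ s * F₄ s ω) ∂μ)
      = ∫ ω, ∑ p, ∑ q, ∑ r, ∑ s, c₁ p * c₂ q * c₃ r * c₄ s
          * (F₁ p ω * F₂ q ω * F₃ r ω * F₄ s ω) ∂μ from by rw [expand]]
  rw [integral_finset_sum _ fun p _ => integrable_finset_sum _ fun q _ =>
    integrable_finset_sum _ fun r _ => integrable_finset_sum _ fun s _ => hint p q r s]
  refine Finset.sum_congr rfl fun p _ => ?_
  rw [integral_finset_sum _ fun q _ =>
    integrable_finset_sum _ fun r _ => integrable_finset_sum _ fun s _ => hint p q r s]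
  refine Finset.sum_congr rfl fun q _ => ?_
  rw [integral_finset_sum _ fun r _ => integrable_finset_sum _ fun s _ => hint p q r s]
  refine Finset.sum_congr rfl fun r _ => ?_
  rw [integral_finset_sum _ fun s _ => hint p q r s]
  exact Finset.sum_congr rfl fun s _ => integral_const_mul _ _

lemma quad_split₁ (A B : Fin n → Fin n → ℂ) :
    (∑ p, ∑ q, A p q) * (∑ r, ∑ s, B r s)
      = ∑ p, ∑ q, ∑ r, ∑ s, A p q * B r s := by
  rw [Finset.sum_mul_sum]
  refine Finset.sum_congr rfl fun p _ => ?_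
  refine (Finset.sum_congr rfl fun r _ => Finset.sum_mul_sum _ _ _ _).trans ?_
  rw [Finset.sum_comm]

lemma quad_split₂ (C D : Fin n → Fin n → ℂ) :
    (∑ p, ∑ r, C p r) * (∑ q, ∑ s, D q s)
      = ∑ p, ∑ q, ∑ r, ∑ s, C p r * D q s := by
  rw [Finset.sum_mul_sum]
  exact Finset.sum_congr rfl fun p _ => Finset.sum_congr rfl fun q _ =>
    Finset.sum_mul_sum _ _ _ _

lemma quad_split₃ (E F : Fin n → Fin n → ℂ) :
    (∑ p, ∑ s, E p s) * (∑ q, ∑ r, F q r)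
      = ∑ p, ∑ q, ∑ r, ∑ s, E p s * F q r := by
  rw [Finset.sum_mul_sum]
  refine Finset.sum_congr rfl fun p _ => Finset.sum_congr rfl fun q _ => ?_
  rw [Finset.sum_mul_sum, Finset.sum_comm]

set_option maxHeartbeats 1000000 in
lemma ccum4_expand [IsFiniteMeasure μ]
    (c₁ c₂ c₃ c₄ : Fin n → ℂ) (F₁ F₂ F₃ F₄ : Fin n → Ω → ℂ)
    (h₁ : ∀ p, MemLp (F₁ p) 4 μ) (h₂ : ∀ p, MemLp (F₂ p) 4 μ)
    (h₃ : ∀ p, MemLp (F₃ p) 4 μ) (h₄ : ∀ p, MemLp (F₄ p) 4 μ) :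
    ccum4 μ (fun ω => ∑ p, c₁ p * F₁ p ω) (fun ω => ∑ p, c₂ p * F₂ p ω)
        (fun ω => ∑ p, c₃ p * F₃ p ω) (fun ω => ∑ p, c₄ p * F₄ p ω)
      = ∑ p, ∑ q, ∑ r, ∑ s, c₁ p * c₂ q * c₃ r * c₄ s
          * ccum4 μ (F₁ p) (F₂ q) (F₃ r) (F₄ s) := by
  unfold ccum4
  rw [integral_mul4_sum c₁ c₂ c₃ c₄ F₁ F₂ F₃ F₄ h₁ h₂ h₃ h₄,
    integral_mul2_sum c₁ c₂ F₁ F₂ h₁ h₂, integral_mul2_sum c₃ c₄ F₃ F₄ h₃ h₄,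
    integral_mul2_sum c₁ c₃ F₁ F₃ h₁ h₃, integral_mul2_sum c₂ c₄ F₂ F₄ h₂ h₄,
    integral_mul2_sum c₁ c₄ F₁ F₄ h₁ h₄, integral_mul2_sum c₂ c₃ F₂ F₃ h₂ h₃]
  simp only [mul_sub, Finset.sum_sub_distrib]
  rw [quad_split₁ (fun p q => c₁ p * c₂ q * ∫ ω, F₁ p ω * F₂ q ω ∂μ)
      (fun r s => c₃ r * c₄ s * ∫ ω, F₃ r ω * F₄ s ω ∂μ),
    quad_split₂ (fun p r => c₁ p * c₃ r * ∫ ω, F₁ p ω * F₃ r ω ∂μ)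
      (fun q s => c₂ q * c₄ s * ∫ ω, F₂ q ω * F₄ s ω ∂μ),
    quad_split₃ (fun p s => c₁ p * c₄ s * ∫ ω, F₁ p ω * F₄ s ω ∂μ)
      (fun q r => c₂ q * c₃ r * ∫ ω, F₂ q ω * F₃ r ω ∂μ)]
  refine congrArg₂ (· - ·) (congrArg₂ (· - ·) (congrArg₂ (· - ·) ?_ ?_) ?_) ?_ <;>
    exact Finset.sum_congr rfl fun p _ => Finset.sum_congr rfl fun q _ =>
      Finset.sum_congr rfl fun r _ => Finset.sum_congr rfl fun s _ => by ring

end Aux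

/-- For `Z = U S` with `U` unitary and `S` having cumulant structure
`Cum[S_i,S_j*,S_k,S_l*] = kurt_i δ_{ijkl}`, the cumulant matrix
`q_{ij} = Σ_{k,l} Cum(Z_i, Z_j*, Z_k, Z_l*) m_{lk}` equals
`Σ_p (kurt_p · u_p' M u_p) u_p u_p'`. -/
theorem cumulant_matrix_structure
    {Ω : Type*} [MeasurableSpace Ω] (μ : Measure Ω) [IsProbabilityMeasure μ]
    (n : ℕ) (U : Matrix (Fin n) (Fin n) ℂ)
    (hU : U ∈ Matrix.unitaryGroup (Fin n) ℂ)
    (S : Fin n → Ω → ℂ)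
    (hS4 : ∀ i, MemLp (S i) 4 μ) (hS0 : ∀ i, ∫ ω, S i ω ∂μ = 0)
    (kurt : Fin n → ℂ)
    (hcum : ∀ i j k l : Fin n,
      ccum4 μ (S i) (fun ω => starRingEnd ℂ (S j ω)) (S k)
        (fun ω => starRingEnd ℂ (S l ω))
        = if i = j ∧ j = k ∧ k = l then kurt i else 0)
    (Z : Fin n → Ω → ℂ) (hZ : ∀ i ω, Z i ω = ∑ p, U i p * S p ω) :
    ∀ (M : Matrix (Fin n) (Fin n) ℂ) (i j : Fin n),
      (∑ k, ∑ l, ccum4 μ (Z i) (fun ω => starRingEnd ℂ (Z j ω)) (Z k)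
          (fun ω => starRingEnd ℂ (Z l ω)) * M l k)
        = ∑ p, kurt p * (∑ a, ∑ b, starRingEnd ℂ (U a p) * M a b * U b p)
            * (U i p * starRingEnd ℂ (U j p)) := by
  intro M i j
  have hSc : ∀ p, MemLp (fun ω => starRingEnd ℂ (S p ω)) 4 μ :=
    fun p => memLp_conj' (hS4 p)
  have hZfun : ∀ a, Z a = fun ω => ∑ p, U a p * S p ω := fun a => funext (hZ a)
  have hZcfun : ∀ a, (fun ω => starRingEnd ℂ (Z a ω))
      = fun ω => ∑ p, starRingEnd ℂ (U a p) * (starRingEnd ℂ (S p ω)) := by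
    intro a; funext ω
    rw [hZ a ω, map_sum]
    exact Finset.sum_congr rfl fun p _ => map_mul _ _ _
  have key : ∀ k l : Fin n,
      ccum4 μ (Z i) (fun ω => starRingEnd ℂ (Z j ω)) (Z k)
        (fun ω => starRingEnd ℂ (Z l ω))
      = ∑ p, U i p * starRingEnd ℂ (U j p) * U k p * starRingEnd ℂ (U l p) * kurt p := by
    intro k l
    rw [hZfun i, hZfun k, hZcfun j, hZcfun l,
      ccum4_expand (fun p => U i p) (fun p => starRingEnd ℂ (U j p))
        (fun p => U k p) (fun p => starRingEnd ℂ (U l p))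
        S (fun p ω => starRingEnd ℂ (S p ω)) S (fun p ω => starRingEnd ℂ (S p ω))
        hS4 hSc hS4 hSc]
    refine Finset.sum_congr rfl fun p _ => ?_
    rw [Finset.sum_eq_single p
      (fun q _ hq => by
        rw [Finset.sum_eq_zero]
        intro r _
        rw [Finset.sum_eq_zero]
        intro s _
        rw [hcum p q r s, if_neg (fun h => hq h.1.symm), mul_zero])
      (by simp)]
    rw [Finset.sum_eq_single p
      (fun r _ hr => by
        rw [Finset.sum_eq_zero]
        intro s _
        rw [hcum p p r s, if_neg (fun h => hr h.2.1.symm), mul_zero])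
      (by simp)]
    rw [Finset.sum_eq_single p
      (fun s _ hs => by
        rw [hcum p p p s, if_neg (fun h => hs h.2.2.symm), mul_zero])
      (by simp)]
    rw [hcum p p p p, if_pos ⟨rfl, rfl, rfl⟩]
  simp only [key]
  simp only [Finset.sum_mul]
  rw [Finset.sum_comm]
  have swap : (∑ l : Fin n, ∑ k : Fin n, ∑ p : Fin n,
        U i p * starRingEnd ℂ (U j p) * U k p * starRingEnd ℂ (U l p) * kurt p * M l k)
      = ∑ p : Fin n, ∑ l : Fin n, ∑ k : Fin n,
        U i p * starRingEnd ℂ (U j p) * U k p * starRingEnd ℂ (U l p) * kurt p * M l k := by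
    exact (Finset.sum_congr rfl fun _ _ => Finset.sum_comm).trans Finset.sum_comm
  rw [swap]
  refine Finset.sum_congr rfl fun p _ => ?_
  simp only [Finset.mul_sum, Finset.sum_mul]
  exact Finset.sum_congr rfl fun a _ => Finset.sum_congr rfl fun b _ => by ring
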